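/- arXiv:2210.01074 — 2 statements merged into one kernel-verified Lean document; each statement's English description precedes it below -/
import Mathlib

section
/- Assume the final time satisfies T > π. There exists a constant C > 0 such that for every m, p ∈ ℕ, every choice of sensor points x_1,…,x_m ∈ 𝕋, and every DeepONet N with m sensor points and p trunk/branch functions, one has E_{ū∼μ}[‖G_Burg(ū) − N(ū)‖_{L¹(𝕋)}] ≥ C/p. -/
open MeasureTheory Real

/-- The uniform probability measure on the interval `[a,b]`. -/
noncomputable def unif (a b : ℝ) : Measure ℝ :=
  (ENNReal.ofReal (b - a))⁻¹ • volume.restrict (Set.Icc a b)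

/-- The entropy solution at time `T > 1` of the Burgers equation with initial data
`ū(x) = -sin(x - ξ)`, expressed through the inverse `Ψinv = Ψ_T⁻¹` of the characteristic map
`Ψ_T(x₀) = x₀ - T sin x₀`: `u(x,T) = -sin(Ψinv(x - ξ + 2π))` for `x < ξ` and
`u(x,T) = -sin(Ψinv(x - ξ))` for `x ≥ ξ`, for `x ∈ [0,2π]`, `ξ ∈ [0,2π)`. -/
noncomputable def burgersSol (Ψinv : ℝ → ℝ) (ξ x : ℝ) : ℝ :=
  if x < ξ then -sin (Ψinv (x - ξ + 2 * π)) else -sin (Ψinv (x - ξ))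

lemma BDL.sin_lip (a b : ℝ) : |sin a - sin b| ≤ |a - b| := by
  rw [Real.sin_sub_sin]
  calc |2 * sin ((a - b)/2) * cos ((a + b)/2)|
      = 2 * |sin ((a-b)/2)| * |cos ((a+b)/2)| := by
        rw [abs_mul, abs_mul]; norm_num
    _ ≤ 2 * |(a-b)/2| * 1 := by
        apply mul_le_mul (by
          have := Real.abs_sin_le_abs (x := (a-b)/2)
          nlinarith [abs_nonneg (sin ((a-b)/2))]) (Real.abs_cos_le_one _)
          (abs_nonneg _) (by positivity)
    _ = |a - b| := by rw [abs_div, abs_two]; ring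

lemma BDL.mul_cos_lt_sin {x : ℝ} (h0 : 0 < x) (hπ : x < π) : x * cos x < sin x := by
  have hmono : StrictMonoOn (fun y => sin y - y * cos y) (Set.Icc 0 π) := by
    apply strictMonoOn_of_deriv_pos (convex_Icc 0 π)
    · exact (Real.continuous_sin.sub (continuous_id.mul Real.continuous_cos)).continuousOn
    · intro y hy
      rw [interior_Icc] at hy
      have hd : HasDerivAt (fun y => sin y - y * cos y) (cos y - (1 * cos y + y * (-sin y))) y :=
        (Real.hasDerivAt_sin y).sub ((hasDerivAt_id y).mul (Real.hasDerivAt_cos y))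
      rw [hd.deriv]
      have := Real.sin_pos_of_pos_of_lt_pi hy.1 hy.2
      nlinarith [mul_pos hy.1 this]
  have := hmono (Set.left_mem_Icc.mpr (le_of_lt Real.pi_pos))
    (Set.mem_Icc.mpr ⟨le_of_lt h0, le_of_lt hπ⟩) h0
  simp at this
  linarith

lemma BDL.rank_contradiction {p : ℕ} (t : Matrix (Fin (p+1)) (Fin p) ℝ)
    (c : Matrix (Fin p) (Fin (p+1)) ℝ)
    (hdom : ∀ j, ∑ i ∈ Finset.univ.erase j, |(t*c) i j| < |(t*c) j j|) : False := by
  have hdet : (t*c).det ≠ 0 := by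
    apply det_ne_zero_of_sum_col_lt_diag
    simpa [Real.norm_eq_abs] using hdom
  have h1 : (t*c).rank = p+1 := by
    rw [Matrix.rank_of_isUnit _ ((Matrix.isUnit_iff_isUnit_det _).mpr (isUnit_iff_ne_zero.mpr hdet))]
    simp
  have h2 : (t*c).rank ≤ p := (Matrix.rank_mul_le_left t c).trans (Matrix.rank_le_width t)
  omega

lemma BDL.Ico_eq_biUnion (n : ℕ) (δ : ℝ) (hδ : 0 < δ) :
    Set.Ico (0:ℝ) ((n:ℝ)*δ) = ⋃ j ∈ Finset.range n, Set.Ico ((j:ℝ)*δ) (((j:ℝ)+1)*δ) := by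
  ext z
  simp only [Set.mem_Ico, Set.mem_iUnion, Finset.mem_range]
  constructor
  · rintro ⟨hz0, hzn⟩
    refine ⟨⌊z/δ⌋₊, ?_, ?_, ?_⟩
    · have h1 : (⌊z/δ⌋₊ : ℝ) ≤ z/δ := Nat.floor_le (by positivity)
      have : (⌊z/δ⌋₊:ℝ) < (n:ℝ) := h1.trans_lt ((div_lt_iff₀ hδ).mpr (by linarith))
      exact_mod_cast this
    · have h1 : (⌊z/δ⌋₊ : ℝ) ≤ z/δ := Nat.floor_le (by positivity)
      calc (⌊z/δ⌋₊:ℝ) * δ ≤ (z/δ)*δ := by nlinarith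
        _ = z := by field_simp
    · have h2 : z/δ < ⌊z/δ⌋₊ + 1 := Nat.lt_floor_add_one _
      calc z = (z/δ)*δ := by field_simp
        _ < ((⌊z/δ⌋₊:ℝ)+1) * δ := by nlinarith
  · rintro ⟨j, hj, hj1, hj2⟩
    have : ((j:ℝ)+1) ≤ (n:ℝ) := by exact_mod_cast hj
    constructor
    · have : (0:ℝ) ≤ (j:ℝ)*δ := by positivity
      linarith
    · nlinarith


set_option maxHeartbeats 4000000 in
lemma BDL.stepB (K h δ : ℝ) (hK : 0 ≤ K) (hh : 0 < h) (hδ : 0 < δ)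
    (Fu : ℝ → ℝ) (hFm : Measurable Fu) (hFb : ∀ y, |Fu y| ≤ 1)
    (hLip : ∀ y y', |Fu y - Fu y'| ≤ K * |y - y'|)
    (hF0 : Fu 0 = -(h/2)) (hF2 : Fu (2*π) = h/2)
    (p n : ℕ) (hp : 1 ≤ p) (hn2 : 2*(p+1) ≤ n)
    (hnδ : (n:ℝ) * δ = 2*π)
    (hKδ : ((p:ℝ)+1) * (K*δ) ≤ h/8)
    (ξ₀ : ℝ) (hξ₀ : 0 ≤ ξ₀) (hξ₀δ : ξ₀ < δ)
    (τ : Fin p → ℝ → ℝ) (hτm : ∀ k, Measurable (τ k))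
    (hτi : ∀ k, IntegrableOn (τ k) (Set.Icc 0 (2*π)))
    (b : ℕ → Fin p → ℝ) :
    (n:ℝ) * h * δ / 16 ≤ ∑ j ∈ Finset.range n, ∫ x in Set.Icc 0 (2*π),
      |(if x < ξ₀ + (j:ℝ)*δ then Fu (x - (ξ₀ + (j:ℝ)*δ) + 2*π) else Fu (x - (ξ₀ + (j:ℝ)*δ))) -
        ∑ k, b j k * τ k x| := by
  classical
  set s : Set ℝ := Set.Icc 0 (2*π) with hs
  set u : ℕ → ℝ → ℝ := fun j x =>
    if x < ξ₀ + (j:ℝ)*δ then Fu (x - (ξ₀ + (j:ℝ)*δ) + 2*π) else Fu (x - (ξ₀ + (j:ℝ)*δ)) with hu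
  set Nf : ℕ → ℝ → ℝ := fun j x => ∑ k, b j k * τ k x with hNf
  set f : ℕ → ℝ → ℝ := fun j x => u j x - Nf j x with hf
  set d : ℕ → ℝ := fun j => ∫ x in s, |f j x| with hd
  set I : ℕ → Set ℝ := fun j => Set.Ico (ξ₀ + (j:ℝ)*δ) (ξ₀ + ((j:ℝ)+1)*δ) with hI
  clear_value s u Nf f d I
  -- basic facts
  have hu_meas : ∀ j, Measurable (u j) := by
    intro j
    rw [hu]
    exact Measurable.ite measurableSet_Iio
      (hFm.comp ((measurable_id.sub_const _).add_const _))
      (hFm.comp (measurable_id.sub_const _))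
  have hu_int : ∀ j, IntegrableOn (u j) s := by
    intro j
    have hfin : IsFiniteMeasure (volume.restrict s) := by
      constructor
      rw [Measure.restrict_apply_univ, hs, Real.volume_Icc]
      exact ENNReal.ofReal_lt_top
    refine Integrable.mono' (μ := volume.restrict s) (integrable_const 1)
      (hu_meas j).aestronglyMeasurable
      (Filter.Eventually.of_forall fun x => ?_)
    rw [Real.norm_eq_abs]
    simp only [hu]
    split_ifs <;> exact hFb _
  have hN_int : ∀ j, IntegrableOn (Nf j) s := by
    intro j
    rw [hNf]
    exact integrable_finset_sum _ fun k _ => (hτi k).const_mul _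
  have hf_int : ∀ j, IntegrableOn (f j) s := by
    intro j
    rw [hf]
    exact (hu_int j).sub (hN_int j)
  have hfabs_int : ∀ j, IntegrableOn (fun x => |f j x|) s := fun j => (hf_int j).abs
  have hd_nonneg : ∀ j, 0 ≤ d j := by
    intro j; rw [hd]; exact integral_nonneg fun x => abs_nonneg _
  have hImeas : ∀ j, MeasurableSet (I j) := by intro j; rw [hI]; exact measurableSet_Ico
  have hIvol : ∀ j, volume (I j) = ENNReal.ofReal δ := by
    intro j
    rw [hI]
    dsimp only
    simp only [Real.volume_Ico]
    congr 1; ring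
  have hIsub : ∀ j : ℕ, j < n - 1 → I j ⊆ s := by
    intro j hj
    rw [hI, hs]
    intro x hx
    obtain ⟨hx1, hx2⟩ := hx
    constructor
    · have : (0:ℝ) ≤ (j:ℝ)*δ := by positivity
      linarith
    · have hj1 : (j:ℝ)+1 ≤ (n:ℝ) - 1 := by
        have : (j:ℕ)+1 ≤ n - 1 := by omega
        have hn1 : (1:ℕ) ≤ n := by omega
        have := (Nat.cast_le (α := ℝ)).mpr this
        push_cast [Nat.cast_sub hn1] at this
        linarith
      have : ξ₀ + ((j:ℝ)+1)*δ < δ + ((n:ℝ)-1)*δ := by nlinarith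
      nlinarith
  have hIdisj : ∀ a b : ℕ, a ≠ b → Disjoint (I a) (I b) := by
    have key : ∀ a b : ℕ, a < b → Disjoint (I a) (I b) := by
      intro a b hab
      rw [hI, Set.disjoint_left]
      rintro x ⟨hx1, hx2⟩ ⟨hy1, hy2⟩
      have : (a:ℝ) + 1 ≤ (b:ℝ) := by exact_mod_cast hab
      nlinarith
    intro a b hab
    rcases hab.lt_or_gt with hlt | hlt
    · exact key a b hlt
    · exact (key b a hlt).symm
  have hτI_int : ∀ (k) (j : ℕ), j < n - 1 → IntegrableOn (τ k) (I j) :=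
    fun k j hj => (hτi k).mono_set (hIsub j hj)
  have huI_int : ∀ (i j : ℕ), i < n - 1 → IntegrableOn (u j) (I i) :=
    fun i j hi => (hu_int j).mono_set (hIsub i hi)
  have hfI_int : ∀ (i j : ℕ), i < n - 1 → IntegrableOn (f j) (I i) :=
    fun i j hi => (hf_int j).mono_set (hIsub i hi)
  have hNI_int : ∀ (i j : ℕ), i < n - 1 → IntegrableOn (Nf j) (I i) :=
    fun i j hi => (hN_int j).mono_set (hIsub i hi)
  have h2Kδ : 2*(K*δ) ≤ h/8 := by
    have : (2:ℝ) ≤ (p:ℝ)+1 := by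
      have : (1:ℝ) ≤ (p:ℝ) := by exact_mod_cast hp
      linarith
    nlinarith [mul_nonneg hK hδ.le]
  -- the diagonal integral bound
  have hdiagInt : ∀ j : ℕ, j < n - 1 →
      ∫ x in I j, (u j x - u (j+1) x) ≤ -(7*h/8)*δ := by
    intro j hj
    have hpt : ∀ x ∈ I j, u j x - u (j+1) x ≤ -(7*h/8) := by
      intro x hx
      rw [hI] at hx
      obtain ⟨hx1, hx2⟩ := hx
      have hxlt : x < ξ₀ + (((j:ℕ)+1:ℕ):ℝ)*δ := by push_cast; linarith
      have e1 : u j x = Fu (x - (ξ₀ + (j:ℝ)*δ)) := by rw [hu]; exact if_neg (not_lt.mpr hx1)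
      have e2 : u (j+1) x = Fu (x - (ξ₀ + (((j:ℕ)+1:ℕ):ℝ)*δ) + 2*π) := by
        rw [hu]
        exact if_pos hxlt
      have b1 : Fu (x - (ξ₀ + (j:ℝ)*δ)) ≤ -(h/2) + K*δ := by
        have := hLip (x - (ξ₀ + (j:ℝ)*δ)) 0
        rw [hF0] at this
        have habs : |x - (ξ₀ + (j:ℝ)*δ) - 0| ≤ δ := by
          rw [abs_le]; constructor <;> [linarith; linarith]
        have h1 := (abs_le.mp this).2
        have h2 : K * |x - (ξ₀ + (j:ℝ)*δ) - 0| ≤ K * δ := mul_le_mul_of_nonneg_left habs hK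
        linarith
      have b2 : -(K*δ) + h/2 ≤ Fu (x - (ξ₀ + (((j:ℕ)+1:ℕ):ℝ)*δ) + 2*π) := by
        have := hLip (x - (ξ₀ + (((j:ℕ)+1:ℕ):ℝ)*δ) + 2*π) (2*π)
        rw [hF2] at this
        have habs : |x - (ξ₀ + (((j:ℕ)+1:ℕ):ℝ)*δ) + 2*π - 2*π| ≤ δ := by
          rw [abs_le]
          push_cast
          constructor <;> [nlinarith; nlinarith]
        have h1 := (abs_le.mp this).1
        have h2 : K * |x - (ξ₀ + (((j:ℕ)+1:ℕ):ℝ)*δ) + 2*π - 2*π| ≤ K * δ :=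
          mul_le_mul_of_nonneg_left habs hK
        linarith
      rw [e1, e2]
      linarith
    calc ∫ x in I j, (u j x - u (j+1) x)
        ≤ ∫ _x in I j, (-(7*h/8)) := by
          apply setIntegral_mono_on ((huI_int j j hj).sub (huI_int j (j+1) hj))
            (integrableOn_const (by rw [hIvol]; exact ENNReal.ofReal_ne_top))
            (hImeas j) hpt
      _ = -(7*h/8)*δ := by
          rw [setIntegral_const, measureReal_def, hIvol, ENNReal.toReal_ofReal hδ.le, smul_eq_mul]; ring
  -- the off-diagonal integral bound
  have hoffInt : ∀ i j : ℕ, i < n - 1 → j < n - 1 → i ≠ j →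
      |∫ x in I i, (u j x - u (j+1) x)| ≤ K*δ*δ := by
    intro i j hi hj hij
    have hpt : ∀ x ∈ I i, |u j x - u (j+1) x| ≤ K*δ := by
      intro x hx
      rw [hI] at hx
      obtain ⟨hx1, hx2⟩ := hx
      rcases hij.lt_or_gt with hlt | hlt
      · -- i < j : x < ξ_j ≤ ξ_{j+1}
        have hij1 : (i:ℝ)+1 ≤ (j:ℝ) := by exact_mod_cast hlt
        have hb1 : x < ξ₀ + (j:ℝ)*δ := by nlinarith
        have hb2 : x < ξ₀ + (((j:ℕ)+1:ℕ):ℝ)*δ := by push_cast; nlinarith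
        have e1 : u j x = Fu (x - (ξ₀ + (j:ℝ)*δ) + 2*π) := by rw [hu]; exact if_pos hb1
        have e2 : u (j+1) x = Fu (x - (ξ₀ + (((j:ℕ)+1:ℕ):ℝ)*δ) + 2*π) := by
          rw [hu]; exact if_pos hb2
        rw [e1, e2]
        have := hLip (x - (ξ₀ + (j:ℝ)*δ) + 2*π) (x - (ξ₀ + (((j:ℕ)+1:ℕ):ℝ)*δ) + 2*π)
        have harg : |x - (ξ₀ + (j:ℝ)*δ) + 2*π - (x - (ξ₀ + (((j:ℕ)+1:ℕ):ℝ)*δ) + 2*π)| = δ := by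
          push_cast
          rw [abs_of_nonneg (by ring_nf; nlinarith)]
          ring
        rw [harg] at this
        exact this
      · -- j < i : ξ_{j+1} ≤ ξ_i ≤ x
        have hij1 : (j:ℝ)+1 ≤ (i:ℝ) := by exact_mod_cast hlt
        have hb1 : ξ₀ + (j:ℝ)*δ ≤ x := by nlinarith
        have hb2 : ξ₀ + (((j:ℕ)+1:ℕ):ℝ)*δ ≤ x := by push_cast; nlinarith
        have e1 : u j x = Fu (x - (ξ₀ + (j:ℝ)*δ)) := by rw [hu]; exact if_neg (not_lt.mpr hb1)
        have e2 : u (j+1) x = Fu (x - (ξ₀ + (((j:ℕ)+1:ℕ):ℝ)*δ)) := by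
          rw [hu]; exact if_neg (not_lt.mpr hb2)
        rw [e1, e2]
        have := hLip (x - (ξ₀ + (j:ℝ)*δ)) (x - (ξ₀ + (((j:ℕ)+1:ℕ):ℝ)*δ))
        have harg : |x - (ξ₀ + (j:ℝ)*δ) - (x - (ξ₀ + (((j:ℕ)+1:ℕ):ℝ)*δ))| = δ := by
          push_cast
          rw [abs_of_nonneg (by ring_nf; nlinarith)]
          ring
        rw [harg] at this
        exact this
    have hg_int : IntegrableOn (fun x => u j x - u (j+1) x) (I i) :=
      (huI_int i j hi).sub (huI_int i (j+1) hi)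
    calc |∫ x in I i, (u j x - u (j+1) x)|
        ≤ ∫ x in I i, |u j x - u (j+1) x| := by
          simpa [Real.norm_eq_abs] using norm_integral_le_integral_norm
            (μ := volume.restrict (I i)) (fun x => u j x - u (j+1) x)
      _ ≤ ∫ _x in I i, K*δ := by
          apply setIntegral_mono_on hg_int.abs
            (integrableOn_const (by rw [hIvol]; exact ENNReal.ofReal_ne_top))
            (hImeas i) hpt
      _ = K*δ*δ := by
          rw [setIntegral_const, measureReal_def, hIvol, ENNReal.toReal_ofReal hδ.le, smul_eq_mul]; ring
  -- Bad set
  set Bad : Finset ℕ := (Finset.range (n-1)).filter (fun j => d j + d (j+1) ≤ h*δ/4) with hBad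
  have hBadsub : Bad ⊆ Finset.range (n-1) := Finset.filter_subset _ _
  -- Claim 1 : Bad.card ≤ p
  have claim1 : Bad.card ≤ p := by
    by_contra hcard
    push_neg at hcard
    obtain ⟨S, hSsub, hScard⟩ := Finset.exists_subset_card_eq (Nat.succ_le_of_lt hcard)
    set σ := S.orderIsoOfFin hScard with hσ
    set e : Fin (p+1) → ℕ := fun i => (σ i : ℕ) with he
    have he_inj : Function.Injective e := fun a b hab => σ.injective (Subtype.ext hab)
    have heBad : ∀ i, e i ∈ Bad := fun i => hSsub (σ i).2
    have heRange : ∀ i, e i < n - 1 := fun i => Finset.mem_range.mp (hBadsub (heBad i))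
    have heBound : ∀ i, d (e i) + d (e i + 1) ≤ h*δ/4 :=
      fun i => (Finset.mem_filter.mp (heBad i)).2
    set t : Matrix (Fin (p+1)) (Fin p) ℝ := fun i k => ∫ x in I (e i), τ k x with ht
    set c : Matrix (Fin p) (Fin (p+1)) ℝ := fun k j => b (e j) k - b (e j + 1) k with hc
    clear_value t c
    apply BDL.rank_contradiction t c
    intro j
    -- entry formula
    have hM : ∀ i : Fin (p+1), (t*c) i j = ∫ x in I (e i), (Nf (e j) x - Nf (e j + 1) x) := by
      intro i
      rw [Matrix.mul_apply]
      have hps : ∀ x, Nf (e j) x - Nf (e j + 1) x = ∑ k, (b (e j) k - b (e j + 1) k) * τ k x := by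
        intro x
        simp only [hNf]
        rw [← Finset.sum_sub_distrib]
        congr 1; ext k; ring
      rw [integral_congr_ae (Filter.Eventually.of_forall hps)]
      rw [integral_finset_sum _ (fun k _ => ((hτI_int k (e i) (heRange i)).const_mul _))]
      simp only [ht, hc]
      refine Finset.sum_congr rfl fun k _ => ?_
      rw [integral_const_mul]
      ring
    set r : Fin (p+1) → ℝ := fun i =>
      (∫ x in I (e i), |f (e j) x|) + (∫ x in I (e i), |f (e j + 1) x|) with hr
    have hr_nonneg : ∀ i, 0 ≤ r i := by
      intro i
      have h1 : 0 ≤ ∫ x in I (e i), |f (e j) x| := integral_nonneg fun x => abs_nonneg _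
      have h2 : 0 ≤ ∫ x in I (e i), |f (e j + 1) x| := integral_nonneg fun x => abs_nonneg _
      rw [hr]; exact add_nonneg h1 h2
    -- approximation of entries by the u-integrals
    have hMg : ∀ i : Fin (p+1),
        |(t*c) i j - ∫ x in I (e i), (u (e j) x - u (e j + 1) x)| ≤ r i := by
      intro i
      have i1 : Integrable (fun x => u (e j) x - u (e j + 1) x) (volume.restrict (I (e i))) :=
        (huI_int _ _ (heRange i)).sub (huI_int _ _ (heRange i))
      have i2 : Integrable (fun x => f (e j) x - f (e j + 1) x) (volume.restrict (I (e i))) :=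
        (hfI_int _ _ (heRange i)).sub (hfI_int _ _ (heRange i))
      have hNsplit : ∫ x in I (e i), (Nf (e j) x - Nf (e j + 1) x)
          = (∫ x in I (e i), (u (e j) x - u (e j + 1) x))
            - ((∫ x in I (e i), f (e j) x) - (∫ x in I (e i), f (e j + 1) x)) := by
        have hps : ∀ x : ℝ, Nf (e j) x - Nf (e j + 1) x
            = (u (e j) x - u (e j + 1) x) - (f (e j) x - f (e j + 1) x) := by
          intro x; simp only [hf]; ring
        rw [integral_congr_ae (Filter.Eventually.of_forall hps)]
        rw [integral_sub i1 i2, integral_sub (hfI_int _ _ (heRange i)) (hfI_int _ _ (heRange i))]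
      rw [hM i, hNsplit]
      have e1 : |∫ x in I (e i), f (e j) x| ≤ ∫ x in I (e i), |f (e j) x| := by
        simpa [Real.norm_eq_abs] using norm_integral_le_integral_norm
          (μ := volume.restrict (I (e i))) (f (e j))
      have e2 : |∫ x in I (e i), f (e j + 1) x| ≤ ∫ x in I (e i), |f (e j + 1) x| := by
        simpa [Real.norm_eq_abs] using norm_integral_le_integral_norm
          (μ := volume.restrict (I (e i))) (f (e j + 1))
      rw [hr]
      have key : ∀ A B C : ℝ, |A - (B - C) - A| ≤ |B| + |C| := by
        intro A B C
        calc |A - (B - C) - A| = |(-B) + C| := by ring_nf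
          _ ≤ |(-B)| + |C| := abs_add_le _ _
          _ = |B| + |C| := by rw [abs_neg]
      calc |(∫ x in I (e i), (u (e j) x - u (e j+1) x))
            - ((∫ x in I (e i), f (e j) x) - (∫ x in I (e i), f (e j+1) x))
            - ∫ x in I (e i), (u (e j) x - u (e j+1) x)|
          ≤ |∫ x in I (e i), f (e j) x| + |∫ x in I (e i), f (e j+1) x| := key _ _ _
        _ ≤ _ := add_le_add e1 e2
    -- sum of r over all rows
    have hsum_r : ∑ i, r i ≤ d (e j) + d (e j + 1) := by
      have key : ∀ g : ℝ → ℝ, IntegrableOn g s → (∀ x, 0 ≤ g x) →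
          ∑ i : Fin (p+1), ∫ x in I (e i), g x ≤ ∫ x in s, g x := by
        intro g hg hg0
        have hdisj : Set.Pairwise ↑(Finset.univ : Finset (Fin (p+1)))
            (Function.onFun Disjoint fun i => I (e i)) := by
          intro a _ b _ hab
          exact hIdisj _ _ (fun hh => hab (he_inj hh))
        rw [← integral_biUnion_finset Finset.univ (fun i _ => hImeas (e i)) hdisj
          (fun i _ => hg.mono_set (hIsub _ (heRange i)))]
        apply setIntegral_mono_set hg
          (Filter.Eventually.of_forall fun x => hg0 x)
        apply HasSubset.Subset.eventuallyLE
        intro x hx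
        simp only [Set.mem_iUnion] at hx
        obtain ⟨i, _, hxi⟩ := hx
        exact hIsub _ (heRange i) hxi
      have k1 := key (fun x => |f (e j) x|) (hfabs_int _) (fun x => abs_nonneg _)
      have k2 := key (fun x => |f (e j + 1) x|) (hfabs_int _) (fun x => abs_nonneg _)
      rw [hr, Finset.sum_add_distrib, hd]
      exact add_le_add k1 k2
    -- dominance
    have hdiag : |(t*c) j j| ≥ 7*h/8*δ - r j := by
      have h1 := hMg j
      have h2 := hdiagInt (e j) (heRange j)
      have : (t*c) j j ≤ -(7*h/8)*δ + r j := by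
        have h3 := (abs_le.mp h1).2
        calc (t*c) j j
            = ((t*c) j j - ∫ x in I (e j), (u (e j) x - u (e j + 1) x))
              + ∫ x in I (e j), (u (e j) x - u (e j + 1) x) := by ring
          _ ≤ r j + (-(7*h/8)*δ) := add_le_add h3 h2
          _ = -(7*h/8)*δ + r j := by ring
      have : -((t*c) j j) ≥ 7*h/8*δ - r j := by linarith
      linarith [neg_abs_le ((t*c) j j)]
    have hoff : ∀ i : Fin (p+1), i ≠ j → |(t*c) i j| ≤ K*δ*δ + r i := by
      intro i hij
      have h1 := hMg i
      have h2 := hoffInt (e i) (e j) (heRange i) (heRange j) (fun hh => hij (he_inj hh))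
      calc |(t*c) i j| ≤ |(t*c) i j - ∫ x in I (e i), (u (e j) x - u (e j+1) x)|
            + |∫ x in I (e i), (u (e j) x - u (e j+1) x)| := by
              have := abs_add_le ((t*c) i j - ∫ x in I (e i), (u (e j) x - u (e j+1) x))
                (∫ x in I (e i), (u (e j) x - u (e j+1) x))
              simpa using this
        _ ≤ r i + K*δ*δ := add_le_add h1 h2
        _ = K*δ*δ + r i := by ring
    have hsum_off : ∑ i ∈ Finset.univ.erase j, |(t*c) i j|
        ≤ (p:ℝ)*(K*δ*δ) + (d (e j) + d (e j + 1) - r j) := by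
      calc ∑ i ∈ Finset.univ.erase j, |(t*c) i j|
          ≤ ∑ i ∈ Finset.univ.erase j, (K*δ*δ + r i) :=
            Finset.sum_le_sum fun i hi => hoff i (Finset.ne_of_mem_erase hi)
        _ = (Finset.univ.erase j).card * (K*δ*δ) + ∑ i ∈ Finset.univ.erase j, r i := by
            rw [Finset.sum_add_distrib, Finset.sum_const, nsmul_eq_mul]
        _ ≤ (p:ℝ)*(K*δ*δ) + (d (e j) + d (e j + 1) - r j) := by
            have hcard : (Finset.univ.erase j).card = p := by
              rw [Finset.card_erase_of_mem (Finset.mem_univ j), Finset.card_univ]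
              simp
            rw [hcard]
            have : ∑ i ∈ Finset.univ.erase j, r i = (∑ i, r i) - r j := by
              rw [← Finset.sum_erase_add Finset.univ r (Finset.mem_univ j)]; ring
            rw [this]
            have := hsum_r
            linarith
    -- combine
    have hpKδ : (p:ℝ)*(K*δ*δ) ≤ h*δ/8 := by
      have h1 : (p:ℝ)*(K*δ) ≤ ((p:ℝ)+1)*(K*δ) := by nlinarith [mul_nonneg hK hδ.le]
      nlinarith
    have hεj := heBound j
    calc ∑ i ∈ Finset.univ.erase j, |(t*c) i j|
        ≤ (p:ℝ)*(K*δ*δ) + (d (e j) + d (e j + 1) - r j) := hsum_off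
      _ < 7*h/8*δ - r j := by nlinarith
      _ ≤ |(t*c) j j| := hdiag
  -- Claim 2 : counting
  set G2 : Finset ℕ := (Finset.range (n-1)) \ Bad with hG2
  have hG2card : G2.card = (n-1) - Bad.card := by
    rw [hG2, Finset.card_sdiff_of_subset hBadsub, Finset.card_range]
  have hG2low : ∀ j ∈ G2, h*δ/4 < d j + d (j+1) := by
    intro j hj
    rw [hG2, Finset.mem_sdiff] at hj
    obtain ⟨hj1, hj2⟩ := hj
    by_contra hcon
    push_neg at hcon
    exact hj2 (Finset.mem_filter.mpr ⟨hj1, hcon⟩)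
  have sum1 : (G2.card : ℝ) * (h*δ/4) ≤ ∑ j ∈ G2, (d j + d (j+1)) := by
    have := Finset.card_nsmul_le_sum G2 (fun j => d j + d (j+1)) (h*δ/4)
      (fun j hj => (hG2low j hj).le)
    simpa [nsmul_eq_mul] using this
  have sum2 : ∑ j ∈ G2, (d j + d (j+1)) ≤ ∑ j ∈ Finset.range (n-1), (d j + d (j+1)) :=
    Finset.sum_le_sum_of_subset_of_nonneg (Finset.sdiff_subset)
      (fun j _ _ => add_nonneg (hd_nonneg j) (hd_nonneg (j+1)))
  have sum4 : ∑ j ∈ Finset.range (n-1), d j ≤ ∑ j ∈ Finset.range n, d j :=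
    Finset.sum_le_sum_of_subset_of_nonneg
      (Finset.range_subset_range.mpr (by omega)) (fun j _ _ => hd_nonneg j)
  have sum5 : ∑ j ∈ Finset.range (n-1), d (j+1) ≤ ∑ j ∈ Finset.range n, d j := by
    have hn1 : n - 1 + 1 = n := by omega
    have := Finset.sum_range_succ' d (n-1)
    rw [hn1] at this
    rw [this]
    linarith [hd_nonneg 0]
  have sum3 : ∑ j ∈ Finset.range (n-1), (d j + d (j+1))
      = (∑ j ∈ Finset.range (n-1), d j) + ∑ j ∈ Finset.range (n-1), d (j+1) :=
    Finset.sum_add_distrib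
  have hG2big : (n:ℝ) ≤ 2*(G2.card:ℝ) := by
    have h1 : n ≤ 2*G2.card := by
      rw [hG2card]
      omega
    exact_mod_cast h1
  -- final assembly
  have final : (n:ℝ)*(h*δ/4) ≤ 4 * ∑ j ∈ Finset.range n, d j := by
    have c1 : (G2.card:ℝ)*(h*δ/4) ≤ 2*∑ j ∈ Finset.range n, d j := by
      calc (G2.card:ℝ)*(h*δ/4) ≤ ∑ j ∈ G2, (d j + d (j+1)) := sum1
        _ ≤ ∑ j ∈ Finset.range (n-1), (d j + d (j+1)) := sum2
        _ = _ + _ := sum3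
        _ ≤ 2*∑ j ∈ Finset.range n, d j := by linarith
    nlinarith [hd_nonneg 0, mul_pos hh hδ]
  calc (n:ℝ) * h * δ / 16 = ((n:ℝ)*(h*δ/4))/4 := by ring
    _ ≤ ∑ j ∈ Finset.range n, d j := by linarith
    _ = _ := by
        simp only [hd, hf, hNf, hu, hs]


set_option maxHeartbeats 4000000 in
/-- **DeepONets fail to approximate the Burgers solution operator efficiently.** Let $T > π$,
let $x_T ∈ (0,π)$ solve $x_T = T \sin x_T$ and let $Ψ\mathrm{inv}$ be the inverse of the
characteristic map $Ψ_T(x_0) = x_0 - T\sin x_0 : [x_T, 2π - x_T] → [0,2π]$, so that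
$G_{Burg}$ maps $ū = -\sin(·-ξ)$ to `burgersSol Ψinv ξ`; the input measure is the law of
$ū = -\sin(·-ξ)$, $ξ$ uniform on $[0,2π]$. There is $C > 0$ such that every DeepONet
$N(ū)(y) = Σ_{k<p} β_k(ū(x_1),…,ū(x_m)) τ_k(y)$ with $m$ sensor points and $p$ trunk/branch
functions satisfies $E_{ū∼μ}[‖G_{Burg}(ū) - N(ū)‖_{L¹(𝕋)}] ≥ C/p$. -/
theorem burgers_deeponet_lower_bound
    (T : ℝ) (hT : π < T)
    (xT : ℝ) (hxT : xT ∈ Set.Ioo 0 π) (hxTeq : xT = T * sin xT)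
    (Ψinv : ℝ → ℝ)
    (hΨinv : ∀ x ∈ Set.Icc (0 : ℝ) (2 * π),
      Ψinv x ∈ Set.Icc xT (2 * π - xT) ∧ Ψinv x - T * sin (Ψinv x) = x) :
    ∃ C > (0 : ℝ), ∀ (m p : ℕ) (X : Fin m → ℝ)
      (β : (Fin m → ℝ) → Fin p → ℝ), Measurable β →
      ∀ τ : Fin p → ℝ → ℝ, (∀ k, Measurable (τ k)) →
      (∀ k, MemLp (τ k) 2 (volume.restrict (Set.Icc 0 (2 * π)))) →
      ENNReal.ofReal (C / (p : ℝ)) ≤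
        ∫⁻ ξ, (∫⁻ x in Set.Icc 0 (2 * π), ENNReal.ofReal
          |burgersSol Ψinv ξ x -
            ∑ k : Fin p, β (fun i => -sin (X i - ξ)) k * τ k x|) ∂unif 0 (2 * π) := by
  obtain ⟨hxT0, hxTπ⟩ := hxT
  have hπ : (0:ℝ) < π := Real.pi_pos
  have hT0 : (0:ℝ) < T := lt_trans hπ hT
  have hsin : 0 < sin xT := Real.sin_pos_of_pos_of_lt_pi hxT0 hxTπ
  have hcos1 : T * cos xT < 1 := by
    have haux := BDL.mul_cos_lt_sin hxT0 hxTπ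
    nlinarith
  set c₀ : ℝ := 1 - T * cos xT with hc₀
  have hc₀pos : 0 < c₀ := by rw [hc₀]; linarith
  set K : ℝ := 1 / c₀ with hKdef
  have hKpos : 0 < K := by rw [hKdef]; positivity
  have hxT2π : xT ≤ 2*π - xT := by linarith
  -- cosine bound on the interval
  have hcosle : ∀ y ∈ Set.Icc xT (2*π - xT), cos y ≤ cos xT := by
    rintro y ⟨hy1, hy2⟩
    rcases le_total y π with hyπ | hyπ
    · exact Real.cos_le_cos_of_nonneg_of_le_pi hxT0.le hyπ hy1
    · rw [← Real.cos_two_pi_sub y]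
      exact Real.cos_le_cos_of_nonneg_of_le_pi hxT0.le (by linarith) (by linarith)
  -- monotonicity of Ψ - c₀ id
  have hmono : MonotoneOn (fun y => (y - T*Real.sin y) - c₀*y) (Set.Icc xT (2*π - xT)) := by
    apply monotoneOn_of_deriv_nonneg (convex_Icc _ _)
    · exact ((continuous_id.sub (continuous_const.mul Real.continuous_sin)).sub
        (continuous_const.mul continuous_id)).continuousOn
    · intro y _
      apply DifferentiableAt.differentiableWithinAt
      exact ((differentiable_id.sub (Real.differentiable_sin.const_mul T)).sub
        ((differentiable_id).const_mul c₀)) y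
    · intro y hy
      rw [interior_Icc] at hy
      have hd : HasDerivAt (fun y => (y - T*Real.sin y) - c₀*y)
          ((1 - T*Real.cos y) - c₀*1) y :=
        ((hasDerivAt_id y).sub ((Real.hasDerivAt_sin y).const_mul T)).sub
          ((hasDerivAt_id y).const_mul c₀)
      rw [hd.deriv]
      have := hcosle y (Set.mem_Icc_of_Ioo hy)
      rw [hc₀]
      nlinarith
  have hmono' : ∀ a ∈ Set.Icc xT (2*π - xT), ∀ b ∈ Set.Icc xT (2*π - xT), a ≤ b →
      c₀ * (b - a) ≤ (b - T*sin b) - (a - T*sin a) := by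
    intro a ha b hb hab
    have := hmono ha hb hab
    simp only at this
    nlinarith
  -- Lipschitz-type bounds for Ψinv
  have hΨdiff : ∀ a ∈ Set.Icc (0:ℝ) (2*π), ∀ b ∈ Set.Icc (0:ℝ) (2*π),
      Ψinv a ≤ Ψinv b → c₀ * (Ψinv b - Ψinv a) ≤ b - a := by
    intro a ha b hb hab
    have h1 := (hΨinv a ha).1
    have h2 := (hΨinv b hb).1
    have h3 := (hΨinv a ha).2
    have h4 := (hΨinv b hb).2
    have := hmono' _ h1 _ h2 hab
    rw [h3, h4] at this
    exact this
  have hΨmono : ∀ a ∈ Set.Icc (0:ℝ) (2*π), ∀ b ∈ Set.Icc (0:ℝ) (2*π),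
      a ≤ b → Ψinv a ≤ Ψinv b := by
    intro a ha b hb hab
    by_contra hcon
    push_neg at hcon
    have := hΨdiff b hb a ha hcon.le
    nlinarith
  have hΨabs : ∀ a ∈ Set.Icc (0:ℝ) (2*π), ∀ b ∈ Set.Icc (0:ℝ) (2*π),
      c₀ * |Ψinv a - Ψinv b| ≤ |a - b| := by
    intro a ha b hb
    rcases le_total (Ψinv a) (Ψinv b) with hc | hc
    · have := hΨdiff a ha b hb hc
      rw [abs_of_nonpos (by linarith), neg_sub]
      calc c₀ * (Ψinv b - Ψinv a) ≤ b - a := this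
        _ ≤ |b - a| := le_abs_self _
        _ = |a - b| := abs_sub_comm _ _
    · have := hΨdiff b hb a ha hc
      rw [abs_of_nonneg (by linarith)]
      calc c₀ * (Ψinv a - Ψinv b) ≤ a - b := this
        _ ≤ |a - b| := le_abs_self _
  -- endpoint values
  have hΨ0 : Ψinv 0 = xT := by
    have h0s : (0:ℝ) ∈ Set.Icc (0:ℝ) (2*π) := ⟨le_refl _, by positivity⟩
    have hmem := (hΨinv 0 h0s).1
    have heq := (hΨinv 0 h0s).2
    have hxTmem : xT ∈ Set.Icc xT (2*π - xT) := ⟨le_rfl, hxT2π⟩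
    have := hmono' _ hxTmem _ hmem hmem.1
    rw [heq] at this
    have hΨxT : xT - T * sin xT = 0 := by linarith [hxTeq]
    rw [hΨxT] at this
    nlinarith [hmem.1]
  have hΨ2π : Ψinv (2*π) = 2*π - xT := by
    have h2s : (2*π) ∈ Set.Icc (0:ℝ) (2*π) := ⟨by positivity, le_refl _⟩
    have hmem := (hΨinv (2*π) h2s).1
    have heq := (hΨinv (2*π) h2s).2
    have hbmem : 2*π - xT ∈ Set.Icc xT (2*π - xT) := ⟨hxT2π, le_rfl⟩
    have := hmono' _ hmem _ hbmem hmem.2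
    rw [heq] at this
    have hb : (2*π - xT) - T * sin (2*π - xT) = 2*π := by
      rw [Real.sin_two_pi_sub]
      linarith [hxTeq]
    rw [hb] at this
    nlinarith [hmem.2]
  -- the globalized inverse and profile
  set G : ℝ → ℝ := fun y => Ψinv (max 0 (min (2*π) y)) with hG
  have hclamp_mem : ∀ y : ℝ, max 0 (min (2*π) y) ∈ Set.Icc (0:ℝ) (2*π) :=
    fun y => ⟨le_max_left _ _, max_le (by positivity) (min_le_left _ _)⟩
  have hclamp_eq : ∀ y ∈ Set.Icc (0:ℝ) (2*π), max 0 (min (2*π) y) = y := by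
    rintro y ⟨h1, h2⟩
    rw [min_eq_right h2, max_eq_right h1]
  have hclamp_lip : ∀ y y' : ℝ,
      |max 0 (min (2*π) y) - max 0 (min (2*π) y')| ≤ |y - y'| := by
    intro y y'
    calc |max 0 (min (2*π) y) - max 0 (min (2*π) y')|
        = |max (min (2*π) y) 0 - max (min (2*π) y') 0| := by rw [max_comm, max_comm 0]
      _ ≤ |min (2*π) y - min (2*π) y'| := abs_max_sub_max_le_abs _ _ _
      _ ≤ max |2*π - 2*π| |y - y'| := abs_min_sub_min_le_max _ _ _ _
      _ = |y - y'| := by simp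
  have hG_mono : Monotone G := by
    intro y y' hyy
    rw [hG]
    exact hΨmono _ (hclamp_mem y) _ (hclamp_mem y')
      (max_le_max le_rfl (min_le_min le_rfl hyy))
  have hG_meas : Measurable G := hG_mono.measurable
  have hG_lip : ∀ y y' : ℝ, |G y - G y'| ≤ K * |y - y'| := by
    intro y y'
    have h1 := hΨabs _ (hclamp_mem y) _ (hclamp_mem y')
    have h2 := hclamp_lip y y'
    rw [hG]
    rw [hKdef, one_div]
    rw [← mul_le_mul_iff_right₀ hc₀pos, ← mul_assoc, mul_inv_cancel₀ (ne_of_gt hc₀pos), one_mul]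
    exact h1.trans h2
  set Fu : ℝ → ℝ := fun y => -sin (G y) with hFu
  have hFu_meas : Measurable Fu := by
    rw [hFu]; exact (Real.measurable_sin.comp hG_meas).neg
  have hFu_lip : ∀ y y' : ℝ, |Fu y - Fu y'| ≤ K * |y - y'| := by
    intro y y'
    rw [hFu]
    have h1 : |-sin (G y) - -sin (G y')| = |sin (G y) - sin (G y')| := by
      rw [← abs_neg]; ring_nf
    rw [h1]
    exact (BDL.sin_lip _ _).trans (hG_lip y y')
  have hFub : ∀ y, |Fu y| ≤ 1 := by
    intro y
    rw [hFu]
    rw [abs_neg]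
    exact Real.abs_sin_le_one _
  set h : ℝ := 2 * sin xT with hh_def
  have hh : 0 < h := by rw [hh_def]; linarith
  have hFu0 : Fu 0 = -(h/2) := by
    rw [hFu, hh_def]
    have : max 0 (min (2*π) 0) = (0:ℝ) := hclamp_eq 0 ⟨le_refl _, by positivity⟩
    rw [hG]
    simp only [this, hΨ0]
    ring
  have hFu2 : Fu (2*π) = h/2 := by
    rw [hFu, hh_def]
    have : max 0 (min (2*π) (2*π)) = (2*π:ℝ) := hclamp_eq _ ⟨by positivity, le_refl _⟩
    rw [hG]
    simp only [this, hΨ2π]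
    rw [Real.sin_two_pi_sub]
    ring
  -- constants
  set A : ℕ := ⌈8*π*K/h⌉₊ + 1 with hA_def
  have hA1 : 1 ≤ A := by omega
  have hApos : (0:ℝ) < (A:ℝ) := by
    have : (1:ℝ) ≤ (A:ℝ) := by exact_mod_cast hA1
    linarith
  have hAge : 8*π*K/h ≤ (A:ℝ) := by
    calc 8*π*K/h ≤ (⌈8*π*K/h⌉₊ : ℝ) := Nat.le_ceil _
      _ ≤ (A:ℝ) := by rw [hA_def]; push_cast; linarith
  refine ⟨π*h/(32*(A:ℝ)), by positivity, ?_⟩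
  intro m p X β hβ τ hτm hτ2
  rcases Nat.eq_zero_or_pos p with hp0 | hp1
  · subst hp0
    simp only [Nat.cast_zero, div_zero, ENNReal.ofReal_zero]
    exact zero_le
  -- some instances
  have hfin : IsFiniteMeasure (volume.restrict (Set.Icc (0:ℝ) (2*π))) := by
    constructor
    rw [Measure.restrict_apply_univ, Real.volume_Icc]
    exact ENNReal.ofReal_lt_top
  have hτi : ∀ k, IntegrableOn (τ k) (Set.Icc (0:ℝ) (2*π)) := by
    intro k
    exact memLp_one_iff_integrable.mp ((hτ2 k).mono_exponent one_le_two)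
  -- grid scale
  set n : ℕ := 2*A*(p+1) with hn_def
  have hn0 : 0 < n := by positivity
  have hnR : (0:ℝ) < (n:ℝ) := by exact_mod_cast hn0
  set δ : ℝ := 2*π/(n:ℝ) with hδ_def
  have hδpos : 0 < δ := by rw [hδ_def]; positivity
  have hnδ : (n:ℝ)*δ = 2*π := by
    rw [hδ_def]; field_simp
  have hn2 : 2*(p+1) ≤ n := by
    rw [hn_def]
    calc 2*(p+1) = (2*1)*(p+1) := by ring
      _ ≤ (2*A)*(p+1) := Nat.mul_le_mul_right _ (by omega)
  have hcastn : (n:ℝ) = 2*(A:ℝ)*((p:ℝ)+1) := by rw [hn_def]; push_cast; ring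
  have hp1R : (1:ℝ) ≤ (p:ℝ) := by exact_mod_cast hp1
  have hpδ : ((p:ℝ)+1)*δ = π/(A:ℝ) := by
    rw [hδ_def, hcastn]
    field_simp
  have hKδ : ((p:ℝ)+1) * (K*δ) ≤ h/8 := by
    have h2 : 8*π*K ≤ (A:ℝ)*h := by
      have := mul_le_mul_of_nonneg_right hAge hh.le
      rw [div_mul_cancel₀ _ (ne_of_gt hh)] at this
      linarith
    calc ((p:ℝ)+1)*(K*δ) = K*(((p:ℝ)+1)*δ) := by ring
      _ = K*π/(A:ℝ) := by rw [hpδ]; ring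
      _ ≤ h/8 := by
          rw [div_le_div_iff₀ hApos (by norm_num)]
          nlinarith
  -- the lower-bound machinery
  have key := BDL.stepB K h δ hKpos.le hh hδpos Fu hFu_meas hFub hFu_lip hFu0 hFu2
    p n hp1 hn2 hnδ hKδ
  -- measurability of the error functional
  set Φ : ℝ → ℝ → ENNReal := fun ξ x => ENNReal.ofReal
    |(if x < ξ then Fu (x - ξ + 2*π) else Fu (x - ξ)) -
      ∑ k : Fin p, β (fun i => -sin (X i - ξ)) k * τ k x| with hΦ
  set E : ℝ → ENNReal := fun ξ => ∫⁻ x in Set.Icc (0:ℝ) (2*π), Φ ξ x with hE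
  have hΦmeas : Measurable (fun q : ℝ × ℝ => Φ q.1 q.2) := by
    rw [hΦ]
    apply ENNReal.measurable_ofReal.comp
    apply Measurable.abs
    apply Measurable.sub
    · apply Measurable.ite
      · exact measurableSet_lt measurable_snd measurable_fst
      · exact hFu_meas.comp ((measurable_snd.sub measurable_fst).add_const _)
      · exact hFu_meas.comp (measurable_snd.sub measurable_fst)
    · apply Finset.measurable_sum
      intro k _
      apply Measurable.mul
      · have hin : Measurable (fun q : ℝ × ℝ => (fun i => -sin (X i - q.1))) := by
          apply measurable_pi_lambda
          intro i
          exact ((measurable_fst.const_sub (X i)).sin).neg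
        exact (measurable_pi_apply k).comp (hβ.comp hin)
      · exact (hτm k).comp measurable_snd
  have hEmeas : Measurable E := by
    rw [hE]
    exact Measurable.lintegral_prod_right' (f := fun q : ℝ × ℝ => Φ q.1 q.2) hΦmeas
  -- rewrite the target integrand
  have hcongr : ∫⁻ ξ in Set.Icc (0:ℝ) (2*π), (∫⁻ x in Set.Icc (0:ℝ) (2 * π), ENNReal.ofReal
      |burgersSol Ψinv ξ x - ∑ k : Fin p, β (fun i => -sin (X i - ξ)) k * τ k x|)
      = ∫⁻ ξ in Set.Icc (0:ℝ) (2*π), E ξ := by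
    apply setLIntegral_congr_fun measurableSet_Icc
    intro ξ hξ
    rw [hE]
    apply setLIntegral_congr_fun measurableSet_Icc
    intro x hx
    rw [hΦ]
    congr 2
    simp only [burgersSol]
    split_ifs with hxξ
    · simp only [hFu, hG]
      have harg : x - ξ + 2*π ∈ Set.Icc (0:ℝ) (2*π) :=
        ⟨by linarith [hx.1, hξ.2], by linarith [hxξ]⟩
      rw [hclamp_eq _ harg]
    · simp only [hFu, hG]
      have harg : x - ξ ∈ Set.Icc (0:ℝ) (2*π) :=
        ⟨by linarith [not_lt.mp hxξ], by linarith [hx.2, hξ.1]⟩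
      rw [hclamp_eq _ harg]
  -- integrability for the ofReal/integral exchange
  have huint : ∀ c : ℝ, IntegrableOn (fun x => if x < c then Fu (x - c + 2*π) else Fu (x - c))
      (Set.Icc (0:ℝ) (2*π)) := by
    intro c
    have hm : Measurable (fun x : ℝ => if x < c then Fu (x - c + 2*π) else Fu (x - c)) :=
      Measurable.ite measurableSet_Iio (hFu_meas.comp ((measurable_id.sub_const _).add_const _))
        (hFu_meas.comp (measurable_id.sub_const _))
    refine Integrable.mono' (integrable_const 1) hm.aestronglyMeasurable
      (Filter.Eventually.of_forall fun x => ?_)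
    rw [Real.norm_eq_abs]
    split_ifs <;> exact hFub _
  have hNint : ∀ bv : Fin p → ℝ, IntegrableOn (fun x => ∑ k : Fin p, bv k * τ k x)
      (Set.Icc (0:ℝ) (2*π)) :=
    fun bv => integrable_finset_sum _ fun k _ => (hτi k).const_mul _
  -- per-offset bound
  have step6 : ∀ ξ₀ ∈ Set.Ico (0:ℝ) δ,
      ENNReal.ofReal ((n:ℝ)*h*δ/16) ≤ ∑ j ∈ Finset.range n, E (ξ₀ + (j:ℝ)*δ) := by
    intro ξ₀ hξ₀
    have hstep := key ξ₀ hξ₀.1 hξ₀.2 τ hτm hτi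
      (fun j k => β (fun i => -sin (X i - (ξ₀ + (j:ℝ)*δ))) k)
    calc ENNReal.ofReal ((n:ℝ)*h*δ/16)
        ≤ ENNReal.ofReal (∑ j ∈ Finset.range n, ∫ x in Set.Icc (0:ℝ) (2*π),
            |(if x < ξ₀ + (j:ℝ)*δ then Fu (x - (ξ₀ + (j:ℝ)*δ) + 2*π)
              else Fu (x - (ξ₀ + (j:ℝ)*δ))) -
              ∑ k : Fin p, β (fun i => -sin (X i - (ξ₀ + (j:ℝ)*δ))) k * τ k x|) :=
          ENNReal.ofReal_le_ofReal hstep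
      _ = ∑ j ∈ Finset.range n, ENNReal.ofReal (∫ x in Set.Icc (0:ℝ) (2*π),
            |(if x < ξ₀ + (j:ℝ)*δ then Fu (x - (ξ₀ + (j:ℝ)*δ) + 2*π)
              else Fu (x - (ξ₀ + (j:ℝ)*δ))) -
              ∑ k : Fin p, β (fun i => -sin (X i - (ξ₀ + (j:ℝ)*δ))) k * τ k x|) :=
          ENNReal.ofReal_sum_of_nonneg fun j _ => integral_nonneg fun x => abs_nonneg _
      _ ≤ ∑ j ∈ Finset.range n, E (ξ₀ + (j:ℝ)*δ) := by
          apply Finset.sum_le_sum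
          intro j _
          have hint : Integrable (fun x => |(if x < ξ₀ + (j:ℝ)*δ
              then Fu (x - (ξ₀ + (j:ℝ)*δ) + 2*π) else Fu (x - (ξ₀ + (j:ℝ)*δ))) -
              ∑ k : Fin p, β (fun i => -sin (X i - (ξ₀ + (j:ℝ)*δ))) k * τ k x|)
              (volume.restrict (Set.Icc (0:ℝ) (2*π))) :=
            ((huint _).sub (hNint _)).abs
          rw [hE, hΦ]
          rw [ofReal_integral_eq_lintegral_ofReal hint
            (Filter.Eventually.of_forall fun x => abs_nonneg _)]
  -- translation invariance
  have htrans : ∀ j : ℕ, ∫⁻ ξ in Set.Ico ((j:ℝ)*δ) (((j:ℝ)+1)*δ), E ξ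
      = ∫⁻ ξ₀ in Set.Ico (0:ℝ) δ, E (ξ₀ + (j:ℝ)*δ) := by
    intro j
    have hpre : (fun x : ℝ => x + (j:ℝ)*δ) ⁻¹' (Set.Ico ((j:ℝ)*δ) (((j:ℝ)+1)*δ))
        = Set.Ico (0:ℝ) δ := by
      ext x
      simp only [Set.mem_preimage, Set.mem_Ico]
      constructor
      · rintro ⟨h1, h2⟩
        constructor <;> nlinarith
      · rintro ⟨h1, h2⟩
        constructor <;> nlinarith
    have hmap : volume.restrict (Set.Ico ((j:ℝ)*δ) (((j:ℝ)+1)*δ))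
        = Measure.map (fun x : ℝ => x + (j:ℝ)*δ) (volume.restrict (Set.Ico (0:ℝ) δ)) := by
      conv_lhs => rw [← map_add_right_eq_self volume ((j:ℝ)*δ)]
      rw [Measure.restrict_map (measurable_add_const _) measurableSet_Ico, hpre]
    rw [hmap, lintegral_map hEmeas (measurable_add_const _)]
  -- assembling
  have key2 : ENNReal.ofReal ((n:ℝ)*h*δ/16) * ENNReal.ofReal δ
      ≤ ∫⁻ ξ in Set.Icc (0:ℝ) (2*π), E ξ := by
    calc ENNReal.ofReal ((n:ℝ)*h*δ/16) * ENNReal.ofReal δ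
        = ∫⁻ _ in Set.Ico (0:ℝ) δ, ENNReal.ofReal ((n:ℝ)*h*δ/16) := by
          rw [setLIntegral_const, Real.volume_Ico, sub_zero]
      _ ≤ ∫⁻ ξ₀ in Set.Ico (0:ℝ) δ, ∑ j ∈ Finset.range n, E (ξ₀ + (j:ℝ)*δ) :=
          setLIntegral_mono' measurableSet_Ico step6
      _ = ∑ j ∈ Finset.range n, ∫⁻ ξ₀ in Set.Ico (0:ℝ) δ, E (ξ₀ + (j:ℝ)*δ) :=
          lintegral_finset_sum _ fun j _ => hEmeas.comp (measurable_add_const _)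
      _ = ∑ j ∈ Finset.range n, ∫⁻ ξ in Set.Ico ((j:ℝ)*δ) (((j:ℝ)+1)*δ), E ξ := by
          exact Finset.sum_congr rfl fun j _ => (htrans j).symm
      _ = ∫⁻ ξ in ⋃ j ∈ Finset.range n, Set.Ico ((j:ℝ)*δ) (((j:ℝ)+1)*δ), E ξ := by
          rw [lintegral_biUnion_finset ?_ (fun j _ => measurableSet_Ico)]
          intro a _ b _ hab
          rw [Function.onFun, Set.disjoint_left]
          rintro x ⟨h1, h2⟩ ⟨h3, h4⟩
          rcases Nat.lt_or_ge a b with hlt | hge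
          · have hcast : (a:ℝ)+1 ≤ (b:ℝ) := by exact_mod_cast hlt
            nlinarith
          · have hlt : b < a := by omega
            have hcast : (b:ℝ)+1 ≤ (a:ℝ) := by exact_mod_cast hlt
            nlinarith
      _ = ∫⁻ ξ in Set.Ico (0:ℝ) (2*π), E ξ := by
          rw [← BDL.Ico_eq_biUnion n δ hδpos, hnδ]
      _ ≤ ∫⁻ ξ in Set.Icc (0:ℝ) (2*π), E ξ :=
          lintegral_mono' (Measure.restrict_mono Set.Ico_subset_Icc_self le_rfl) le_rfl
  -- final arithmetic
  have hreal : π*h/(32*(A:ℝ))/(p:ℝ) ≤ ((n:ℝ)*h*δ/16*δ)/(2*π) := by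
    have hRHS : ((n:ℝ)*h*δ/16*δ)/(2*π) = h*δ/16 := by
      have : (n:ℝ)*h*δ/16*δ = (h*δ/16)*((n:ℝ)*δ) := by ring
      rw [this, hnδ, mul_div_assoc, div_self (by positivity : (2*π:ℝ) ≠ 0), mul_one]
    rw [hRHS]
    have hδval : δ = π/((A:ℝ)*((p:ℝ)+1)) := by
      rw [hδ_def, hcastn]
      field_simp
    rw [hδval]
    rw [div_div]
    have hAp1 : (0:ℝ) < (A:ℝ)*((p:ℝ)+1) := by positivity
    have hrw : h*(π/((A:ℝ)*((p:ℝ)+1)))/16 = (π*h)/(16*((A:ℝ)*((p:ℝ)+1))) := by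
      field_simp
    rw [hrw, div_le_div_iff₀ (by positivity) (by positivity)]
    nlinarith [mul_nonneg (mul_nonneg hπ.le hh.le)
      (mul_nonneg hApos.le (sub_nonneg.mpr hp1R))]
  -- put it together
  show ENNReal.ofReal (π*h/(32*(A:ℝ)) / (p:ℝ)) ≤ _
  rw [unif, lintegral_smul_measure, sub_zero, hcongr]
  calc ENNReal.ofReal (π*h/(32*(A:ℝ)) / (p:ℝ))
      ≤ ENNReal.ofReal (((n:ℝ)*h*δ/16*δ)/(2*π)) := ENNReal.ofReal_le_ofReal hreal
    _ = ENNReal.ofReal ((n:ℝ)*h*δ/16*δ) / ENNReal.ofReal (2*π) :=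
        ENNReal.ofReal_div_of_pos (by positivity)
    _ = (ENNReal.ofReal (2*π))⁻¹ * ENNReal.ofReal ((n:ℝ)*h*δ/16*δ) := by
        rw [ENNReal.div_eq_inv_mul]
    _ = (ENNReal.ofReal (2*π))⁻¹ * (ENNReal.ofReal ((n:ℝ)*h*δ/16) * ENNReal.ofReal δ) := by
        rw [← ENNReal.ofReal_mul (by positivity)]
    _ ≤ (ENNReal.ofReal (2*π))⁻¹ * ∫⁻ ξ in Set.Icc (0:ℝ) (2*π), E ξ :=
        mul_le_mul_right key2 _
end

section
/- Let t > 1 and define U_t : [0,2π] → ℝ by U_t(x) = −sin(Ψ_t^{−1}(x)). Then there exists Δ_t > 0 (depending on t) and a real-analytic function Ū : (−Δ_t, 2π + Δ_t) → ℝ such that Ū(x) = U_t(x) for all x ∈ [0,2π]. -/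
open Real

lemma analyticAt_rsin (x : ℝ) : AnalyticAt ℝ Real.sin x := by
  have h1 : AnalyticAt ℝ Complex.sin (x : ℂ) :=
    (Complex.differentiable_sin.analyticAt (x : ℂ)).restrictScalars
  have h2 : AnalyticAt ℝ (fun y : ℝ => (y : ℂ)) x :=
    Complex.ofRealCLM.analyticAt x
  have h3 : AnalyticAt ℝ (fun z : ℂ => z.re) (Complex.sin x) :=
    Complex.reCLM.analyticAt _
  have h4 : AnalyticAt ℝ (fun y : ℝ => (Complex.sin (y : ℂ)).re) x :=
    (h3.comp h1).comp h2
  have heq : (fun y : ℝ => (Complex.sin (y : ℂ)).re) = Real.sin := by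
    funext y
    rw [← Complex.ofReal_sin, Complex.ofReal_re]
  rwa [heq] at h4

lemma lipschitz_rcos (x y : ℝ) : |Real.cos x - Real.cos y| ≤ |x - y| := by
  rw [Real.cos_sub_cos]
  have h1 : |Real.sin ((x + y) / 2)| ≤ 1 := Real.abs_sin_le_one _
  have h2 : |Real.sin ((x - y) / 2)| ≤ |(x - y) / 2| := Real.abs_sin_le_abs
  calc |(-2) * Real.sin ((x + y) / 2) * Real.sin ((x - y) / 2)|
      = 2 * |Real.sin ((x + y) / 2)| * |Real.sin ((x - y) / 2)| := by
        rw [abs_mul, abs_mul]; norm_num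
    _ ≤ 2 * 1 * |(x - y) / 2| := by
        apply mul_le_mul _ h2 (abs_nonneg _) (by norm_num)
        exact mul_le_mul_of_nonneg_left h1 (by norm_num)
    _ = |x - y| := by rw [abs_div]; simp; ring

/-- sin x > x cos x for x ∈ (0, π) -/
lemma sin_gt_mul_cos {x : ℝ} (h0 : 0 < x) (hπ : x < π) : x * Real.cos x < Real.sin x := by
  rcases le_or_gt (π / 2) x with h | h
  · have hc : Real.cos x ≤ 0 := Real.cos_nonpos_of_pi_div_two_le_of_le h (by linarith [Real.pi_pos])
    have hs : 0 < Real.sin x := Real.sin_pos_of_pos_of_lt_pi h0 hπ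
    nlinarith
  · have hc : 0 < Real.cos x := Real.cos_pos_of_mem_Ioo ⟨by linarith, h⟩
    have ht : x < Real.tan x := Real.lt_tan h0 h
    have := mul_lt_mul_of_pos_right ht hc
    rwa [Real.tan_eq_sin_div_cos, div_mul_cancel₀ _ (ne_of_gt hc)] at this

/-- **Lemma (analytic extension of the Burgers profile).** Let `t > 1`, let `x_t ∈ (0,π)` be the
solution of `x_t = t·sin x_t` and let `Ψ_t⁻¹ : [0,2π] → [x_t, 2π - x_t]` be the inverse of the
bijection `Ψ_t(x₀) = x₀ - t·sin x₀`. Then `U_t(x) = -sin(Ψ_t⁻¹ x)` admits a real-analytic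
extension to an open interval `(-Δ_t, 2π + Δ_t)` for some `Δ_t > 0`. -/
theorem burgers_profile_analytic_extension (t : ℝ) (ht : 1 < t)
    (xt : ℝ) (hxt : xt ∈ Set.Ioo 0 π) (hxteq : xt = t * sin xt)
    (Ψinv : ℝ → ℝ)
    (hΨinv : ∀ x ∈ Set.Icc (0 : ℝ) (2 * π),
      Ψinv x ∈ Set.Icc xt (2 * π - xt) ∧ Ψinv x - t * sin (Ψinv x) = x) :
    ∃ Δ > (0 : ℝ), ∃ Ubar : ℝ → ℝ,
      AnalyticOnNhd ℝ Ubar (Set.Ioo (-Δ) (2 * π + Δ)) ∧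
      ∀ x ∈ Set.Icc (0 : ℝ) (2 * π), Ubar x = -sin (Ψinv x) := by
  obtain ⟨hxt0, hxtπ⟩ := hxt
  have hπ := Real.pi_pos
  have hsinxt : 0 < Real.sin xt := Real.sin_pos_of_pos_of_lt_pi hxt0 hxtπ
  have ht0 : 0 < t := by linarith
  -- t * cos xt < 1
  have htcos : t * Real.cos xt < 1 := by
    have h1 : xt * Real.cos xt < Real.sin xt := sin_gt_mul_cos hxt0 hxtπ
    have h2 : t * Real.cos xt * Real.sin xt < 1 * Real.sin xt := by
      rw [one_mul]
      calc t * Real.cos xt * Real.sin xt = (t * Real.sin xt) * Real.cos xt := by ring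
        _ = xt * Real.cos xt := by rw [← hxteq]
        _ < Real.sin xt := h1
    exact lt_of_mul_lt_mul_right h2 (le_of_lt hsinxt)
  set c : ℝ := 1 - t * Real.cos xt with hc_def
  have hc : 0 < c := by simp only [hc_def]; linarith
  -- cos y ≤ cos xt on the closed interval
  have hcosle : ∀ y ∈ Set.Icc xt (2 * π - xt), Real.cos y ≤ Real.cos xt := by
    intro y ⟨hy1, hy2⟩
    rcases le_or_gt y π with h | h
    · exact Real.cos_le_cos_of_nonneg_of_le_pi (le_of_lt hxt0) h hy1
    · have h1 : Real.cos y = Real.cos (2 * π - y) := by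
        rw [Real.cos_two_pi_sub]
      rw [h1]
      exact Real.cos_le_cos_of_nonneg_of_le_pi (le_of_lt hxt0) (by linarith) (by linarith)
  -- extension margin
  set ε : ℝ := c / (2 * t) with hε_def
  have hε : 0 < ε := div_pos hc (by linarith)
  set a : ℝ := xt - ε with ha_def
  set b : ℝ := 2 * π - xt + ε with hb_def
  have hab : a < b := by simp only [ha_def, hb_def]; linarith
  have haxt : a < xt := by simp only [ha_def]; linarith
  have hbxt : 2 * π - xt < b := by simp only [hb_def]; linarith
  have hxtb : xt ≤ 2 * π - xt := by linarith
  -- positivity of 1 - t cos y on [a, b]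
  have hpos : ∀ y ∈ Set.Icc a b, 0 < 1 - t * Real.cos y := by
    intro y ⟨hy1, hy2⟩
    set z : ℝ := max xt (min y (2 * π - xt)) with hz_def
    have hz1 : xt ≤ z := le_max_left _ _
    have hz2 : z ≤ 2 * π - xt := max_le hxtb (min_le_right _ _)
    have hzS : z ∈ Set.Icc xt (2 * π - xt) := ⟨hz1, hz2⟩
    have hdist : |y - z| ≤ ε := by
      rcases le_or_gt y xt with h1 | h1
      · have : z = xt := by
          rw [hz_def, min_eq_left (le_trans h1 hxtb), max_eq_left h1]
        rw [this, abs_le]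
        constructor <;> simp only [ha_def] at hy1 <;> linarith
      · rcases le_or_gt y (2 * π - xt) with h2 | h2
        · have : z = y := by
            rw [hz_def, min_eq_left h2, max_eq_right (le_of_lt h1)]
          rw [this]; simp [le_of_lt hε]
        · have : z = 2 * π - xt := by
            rw [hz_def, min_eq_right (le_of_lt h2), max_eq_right hxtb]
          rw [this, abs_le]
          constructor <;> simp only [hb_def] at hy2 <;> linarith
    have hlip : |Real.cos y - Real.cos z| ≤ |y - z| := lipschitz_rcos y z
    have hcz : Real.cos z ≤ Real.cos xt := hcosle z hzS
    have h1 : Real.cos y - Real.cos z ≤ ε := le_trans (le_trans (le_abs_self _) hlip) hdist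
    have htε : t * ε = c / 2 := by
      simp only [hε_def]; field_simp
    nlinarith [mul_le_mul_of_nonneg_left h1 (le_of_lt ht0),
      mul_le_mul_of_nonneg_left hcz (le_of_lt ht0)]
  -- the forward map
  set Ψ : ℝ → ℝ := fun y => y - t * Real.sin y with hΨ_def
  have hΨana : ∀ y : ℝ, AnalyticAt ℝ Ψ y := fun y =>
    (analyticAt_id).sub (analyticAt_const.mul (analyticAt_rsin y))
  have hΨstrict : ∀ y : ℝ, HasStrictDerivAt Ψ (1 - t * Real.cos y) y := by
    intro y
    exact (hasStrictDerivAt_id y).sub ((Real.hasStrictDerivAt_sin y).const_mul t)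
  have hΨderiv : ∀ y : ℝ, HasDerivAt Ψ (1 - t * Real.cos y) y :=
    fun y => (hΨstrict y).hasDerivAt
  have hΨcont : Continuous Ψ := by fun_prop
  have hmono : StrictMonoOn Ψ (Set.Icc a b) := by
    apply strictMonoOn_of_deriv_pos (convex_Icc a b) (hΨcont.continuousOn)
    intro y hy
    rw [interior_Icc] at hy
    rw [(hΨderiv y).deriv]
    exact hpos y ⟨le_of_lt hy.1, le_of_lt hy.2⟩
  -- endpoint values
  have hΨxt : Ψ xt = 0 := by simp only [hΨ_def]; linarith [hxteq]
  have hΨxt' : Ψ (2 * π - xt) = 2 * π := by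
    simp only [hΨ_def]
    rw [Real.sin_two_pi_sub]
    linarith [hxteq]
  have hxtmem : xt ∈ Set.Icc a b := ⟨le_of_lt haxt, by linarith⟩
  have hxtmem' : (2 * π - xt) ∈ Set.Icc a b := ⟨by linarith, le_of_lt hbxt⟩
  have hamem : a ∈ Set.Icc a b := ⟨le_refl a, le_of_lt hab⟩
  have hbmem : b ∈ Set.Icc a b := ⟨le_of_lt hab, le_refl b⟩
  have hΨa : Ψ a < 0 := by
    have := hmono hamem hxtmem haxt
    rwa [hΨxt] at this
  have hΨb : 2 * π < Ψ b := by
    have := hmono hxtmem' hbmem hbxt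
    rwa [hΨxt'] at this
  set Δ : ℝ := min (-Ψ a) (Ψ b - 2 * π) with hΔ_def
  have hΔ : 0 < Δ := lt_min (by linarith) (by linarith)
  have hsub : Set.Ioo (-Δ) (2 * π + Δ) ⊆ Set.Ioo (Ψ a) (Ψ b) := by
    intro x ⟨hx1, hx2⟩
    constructor
    · have : Δ ≤ -Ψ a := min_le_left _ _
      linarith
    · have : Δ ≤ Ψ b - 2 * π := min_le_right _ _
      linarith
  -- existence of the inverse
  have hex : ∀ x ∈ Set.Ioo (Ψ a) (Ψ b), ∃ y ∈ Set.Ioo a b, Ψ y = x := by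
    intro x hx
    have := intermediate_value_Ioo (le_of_lt hab) hΨcont.continuousOn hx
    obtain ⟨y, hy, hΨy⟩ := this
    exact ⟨y, hy, hΨy⟩
  classical
  set g : ℝ → ℝ := fun x =>
    if hx : x ∈ Set.Ioo (Ψ a) (Ψ b) then (hex x hx).choose else 0 with hg_def
  have hg : ∀ x (hx : x ∈ Set.Ioo (Ψ a) (Ψ b)), g x ∈ Set.Ioo a b ∧ Ψ (g x) = x := by
    intro x hx
    simp only [hg_def, dif_pos hx]
    exact ⟨(hex x hx).choose_spec.1, (hex x hx).choose_spec.2⟩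
  have hinj := hmono.injOn
  -- analyticity of g
  have hgana : ∀ x₀ ∈ Set.Ioo (Ψ a) (Ψ b), AnalyticAt ℝ g x₀ := by
    intro x₀ hx₀
    obtain ⟨hy₀mem, hy₀eq⟩ := hg x₀ hx₀
    set y₀ : ℝ := g x₀
    set d : ℝ := 1 - t * Real.cos y₀ with hd_def
    have hd : d ≠ 0 :=
      ne_of_gt (hpos y₀ ⟨le_of_lt hy₀mem.1, le_of_lt hy₀mem.2⟩)
    have hstrict : HasStrictDerivAt Ψ d y₀ := hΨstrict y₀
    have hstrictF : HasStrictFDerivAt Ψ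
        ((ContinuousLinearEquiv.unitsEquivAut ℝ (Units.mk0 d hd)) : ℝ →L[ℝ] ℝ) y₀ :=
      hstrict.hasStrictFDerivAt_equiv hd
    set F := hstrictF.toOpenPartialHomeomorph Ψ with hF_def
    have hFcoe : (F : ℝ → ℝ) = Ψ := hstrictF.toOpenPartialHomeomorph_coe
    have hFsrc : y₀ ∈ F.source := hstrictF.mem_toOpenPartialHomeomorph_source
    have hFy₀ : F y₀ = x₀ := by rw [hFcoe]; exact hy₀eq
    have hFtgt : x₀ ∈ F.target := by
      rw [← hFy₀]; exact F.map_source hFsrc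
    have hfderiv : fderiv ℝ Ψ y₀ =
        (ContinuousLinearEquiv.unitsEquivAut ℝ (Units.mk0 d hd) :
          ℝ →L[ℝ] ℝ) := by
      rw [hstrict.hasDerivAt.hasFDerivAt.fderiv]
      ext
      simp [ContinuousLinearEquiv.unitsEquivAut, mul_comm]
    have hsymm : AnalyticAt ℝ F.symm x₀ := by
      rw [← hFy₀]
      exact F.analyticAt_symm' hFsrc (by rw [hFcoe]; exact hΨana y₀) (by rw [hFcoe]; exact hfderiv)
    have hFsymm_x₀ : F.symm x₀ = y₀ := by
      rw [← hFy₀]; exact F.left_inv hFsrc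
    -- g coincides with F.symm near x₀
    have hev : F.symm =ᶠ[nhds x₀] g := by
      have h1 : ∀ᶠ x in nhds x₀, x ∈ F.target := F.open_target.eventually_mem hFtgt
      have h2 : ∀ᶠ x in nhds x₀, x ∈ Set.Ioo (Ψ a) (Ψ b) :=
        isOpen_Ioo.eventually_mem hx₀
      have hcsymm : ContinuousAt F.symm x₀ := F.continuousAt_symm hFtgt
      have h3 : ∀ᶠ x in nhds x₀, F.symm x ∈ Set.Ioo a b := by
        apply hcsymm.eventually_mem
        rw [hFsymm_x₀]
        exact isOpen_Ioo.mem_nhds hy₀mem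
      filter_upwards [h1, h2, h3] with x hx1 hx2 hx3
      obtain ⟨hgx_mem, hgx_eq⟩ := hg x hx2
      have hΨsymm : Ψ (F.symm x) = x := by
        rw [← hFcoe]; exact F.right_inv hx1
      exact hinj (Set.mem_Icc_of_Ioo hx3) (Set.mem_Icc_of_Ioo hgx_mem)
        (by rw [hΨsymm, hgx_eq])
    exact hsymm.congr hev
  -- conclude
  refine ⟨Δ, hΔ, fun x => -Real.sin (g x), ?_, ?_⟩
  · intro x hx
    exact ((analyticAt_rsin (g x)).comp (hgana x (hsub hx))).neg
  · intro x hx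
    obtain ⟨hΨinv_mem, hΨinv_eq⟩ := hΨinv x hx
    have hx' : x ∈ Set.Ioo (Ψ a) (Ψ b) := by
      obtain ⟨hx1, hx2⟩ := hx
      exact ⟨by linarith, by linarith⟩
    obtain ⟨hgx_mem, hgx_eq⟩ := hg x hx'
    have hΨinv_mem' : Ψinv x ∈ Set.Icc a b :=
      ⟨by linarith [hΨinv_mem.1], by linarith [hΨinv_mem.2]⟩
    have : g x = Ψinv x :=
      hinj (Set.mem_Icc_of_Ioo hgx_mem) hΨinv_mem'
        (by rw [hgx_eq]; exact hΨinv_eq.symm)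
    exact congrArg (fun y => -Real.sin y) this
end
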